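/- Let X₁, …, X_B (B ≥ 1) be iid real-valued square-integrable random variables with common mean μ and variance σ², and let X̄_B = (1/B)∑ᵢ Xᵢ. Let g : ℝ → ℝ be twice differentiable with |g''(x)| ≤ M for all x, and suppose g(X̄_B) is integrable. Then |𝔼[g(X̄_B)] − g(μ)| ≤ M·σ²/(2B). In particular, √B·(𝔼[g(X̄_B)] − g(𝔼[X̄_B])) → 0 as B → ∞. -/

import Mathlib

open MeasureTheory ProbabilityTheory

open Set in
lemma taylor2_aux {g g' g'' : ℝ → ℝ} (hg' : ∀ x, HasDerivAt g (g' x) x)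
    (hg'' : ∀ x, HasDerivAt g' (g'' x) x) {M : ℝ} (hM : ∀ x, |g'' x| ≤ M)
    (a x : ℝ) : |g x - g a - g' a * (x - a)| ≤ M / 2 * (x - a) ^ 2 := by
  have hM0 : 0 ≤ M := le_trans (abs_nonneg _) (hM 0)
  have hLip : ∀ s t : ℝ, |g' t - g' s| ≤ M * |t - s| := by
    intro s t
    have := Convex.norm_image_sub_le_of_norm_hasDerivWithin_le
      (f := g') (f' := g'') (s := Set.univ) (C := M)
      (fun y _ => (hg'' y).hasDerivWithinAt) (fun y _ => by simpa [Real.norm_eq_abs] using hM y)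
      convex_univ (Set.mem_univ s) (Set.mem_univ t)
    simpa [Real.norm_eq_abs] using this
  set φ : ℝ → ℝ := fun t => g t - g a - g' a * (t - a) - M / 2 * (t - a) ^ 2 with hφdef
  set ψ : ℝ → ℝ := fun t => g t - g a - g' a * (t - a) + M / 2 * (t - a) ^ 2 with hψdef
  have hlin : ∀ t : ℝ, HasDerivAt (fun t => g' a * (t - a)) (g' a) t := by
    intro t
    simpa using ((hasDerivAt_id t).sub_const a).const_mul (g' a)
  have hsq : ∀ t : ℝ, HasDerivAt (fun t => M / 2 * (t - a) ^ 2) (M * (t - a)) t := by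
    intro t
    have := (((hasDerivAt_id t).sub_const a).pow 2).const_mul (M / 2)
    refine this.congr_deriv ?_
    simp only [id_eq]
    ring
  have hφ : ∀ t, HasDerivAt φ (g' t - g' a - M * (t - a)) t := fun t =>
    (((hg' t).sub_const (g a)).sub (hlin t)).sub (hsq t)
  have hψ : ∀ t, HasDerivAt ψ (g' t - g' a + M * (t - a)) t := fun t =>
    (((hg' t).sub_const (g a)).sub (hlin t)).add (hsq t)
  have hφa : φ a = 0 := by simp [hφdef]
  have hψa : ψ a = 0 := by simp [hψdef]
  have key : φ x ≤ 0 ∧ 0 ≤ ψ x := by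
    rcases le_total a x with hax | hax
    · constructor
      · have hanti : AntitoneOn φ (Icc a x) := by
          apply antitoneOn_of_hasDerivWithinAt_nonpos (convex_Icc a x)
            (fun t _ => (hφ t).continuousAt.continuousWithinAt)
            (fun t _ => (hφ t).hasDerivWithinAt)
          intro t ht
          rw [interior_Icc] at ht
          have h1 : g' t - g' a ≤ M * (t - a) := by
            have := hLip a t
            rw [abs_of_nonneg (by linarith [ht.1] : (0:ℝ) ≤ t - a)] at this
            exact (abs_le.1 this).2
          linarith
        have := hanti (left_mem_Icc.2 hax) (right_mem_Icc.2 hax) hax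
        linarith [hφa ▸ this]
      · have hmono : MonotoneOn ψ (Icc a x) := by
          apply monotoneOn_of_hasDerivWithinAt_nonneg (convex_Icc a x)
            (fun t _ => (hψ t).continuousAt.continuousWithinAt)
            (fun t _ => (hψ t).hasDerivWithinAt)
          intro t ht
          rw [interior_Icc] at ht
          have h1 : -(M * (t - a)) ≤ g' t - g' a := by
            have := hLip a t
            rw [abs_of_nonneg (by linarith [ht.1] : (0:ℝ) ≤ t - a)] at this
            exact (abs_le.1 this).1
          linarith
        have := hmono (left_mem_Icc.2 hax) (right_mem_Icc.2 hax) hax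
        linarith [hψa ▸ this]
    · constructor
      · have hmono : MonotoneOn φ (Icc x a) := by
          apply monotoneOn_of_hasDerivWithinAt_nonneg (convex_Icc x a)
            (fun t _ => (hφ t).continuousAt.continuousWithinAt)
            (fun t _ => (hφ t).hasDerivWithinAt)
          intro t ht
          rw [interior_Icc] at ht
          have h1 : -(M * (a - t)) ≤ g' t - g' a := by
            have := hLip a t
            rw [abs_of_nonpos (by linarith [ht.2] : t - a ≤ 0)] at this
            have := (abs_le.1 this).1
            linarith
          linarith
        have := hmono (left_mem_Icc.2 hax) (right_mem_Icc.2 hax) hax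
        linarith [hφa ▸ this]
      · have hanti : AntitoneOn ψ (Icc x a) := by
          apply antitoneOn_of_hasDerivWithinAt_nonpos (convex_Icc x a)
            (fun t _ => (hψ t).continuousAt.continuousWithinAt)
            (fun t _ => (hψ t).hasDerivWithinAt)
          intro t ht
          rw [interior_Icc] at ht
          have h1 : g' t - g' a ≤ M * (a - t) := by
            have := hLip a t
            rw [abs_of_nonpos (by linarith [ht.2] : t - a ≤ 0)] at this
            have := (abs_le.1 this).2
            linarith
          linarith
        have := hanti (left_mem_Icc.2 hax) (right_mem_Icc.2 hax) hax
        linarith [hψa ▸ this]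
  rw [abs_le]
  constructor
  · have := key.2
    simp only [hψdef] at this
    linarith
  · have := key.1
    simp only [hφdef] at this
    linarith

/-- For iid square-integrable real random variables `X₁,…,X_B` with mean `μ0` and variance
`σ2`, and a twice differentiable `g` with `|g''| ≤ M` such that `g(X̄_B)` is integrable,
`|𝔼[g(X̄_B)] − g(μ0)| ≤ M·σ2/(2B)`. -/
theorem stmt_11 {Ω : Type*} [MeasureSpace Ω] [IsProbabilityMeasure (ℙ : Measure Ω)]
    (B : ℕ) (hB : 1 ≤ B) (X : Fin B → Ω → ℝ)
    (hmeas : ∀ i, Measurable (X i))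
    (hindep : iIndepFun X ℙ)
    (hident : ∀ i j, IdentDistrib (X i) (X j) ℙ ℙ)
    (hL2 : ∀ i, MemLp (X i) 2 ℙ)
    (μ0 σ2 : ℝ)
    (hmean : ∀ i, ∫ ω, X i ω ∂ℙ = μ0)
    (hvar : ∀ i, variance (X i) ℙ = σ2)
    (g g' g'' : ℝ → ℝ)
    (hg' : ∀ x, HasDerivAt g (g' x) x)
    (hg'' : ∀ x, HasDerivAt g' (g'' x) x)
    (M : ℝ) (hM : ∀ x, |g'' x| ≤ M)
    (hint : Integrable (fun ω => g ((B : ℝ)⁻¹ * ∑ i, X i ω)) ℙ) :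
    |(∫ ω, g ((B : ℝ)⁻¹ * ∑ i, X i ω) ∂ℙ) - g μ0| ≤ M * σ2 / (2 * B) := by

  have hBne : (B : ℝ) ≠ 0 := Nat.cast_ne_zero.2 (by omega)
  have hM0 : 0 ≤ M := le_trans (abs_nonneg _) (hM 0)
  set S : Ω → ℝ := fun ω => (B : ℝ)⁻¹ * ∑ i, X i ω with hSdef
  have hSeq : S = (B : ℝ)⁻¹ • (∑ i, X i) := by
    funext ω; simp [hSdef, Finset.sum_apply]
  have hsum2 : MemLp (∑ i, X i) 2 ℙ := memLp_finset_sum' _ (fun i _ => hL2 i)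
  have hS2 : MemLp S 2 ℙ := by rw [hSeq]; exact hsum2.const_smul _
  have hSint : Integrable S ℙ := hS2.integrable one_le_two
  -- mean of S
  have hSmean : ∫ ω, S ω ∂ℙ = μ0 := by
    simp only [hSdef]
    rw [integral_const_mul, integral_finset_sum _ (fun i _ => (hL2 i).integrable one_le_two)]
    simp only [hmean, Finset.sum_const, Finset.card_univ, Fintype.card_fin, nsmul_eq_mul]
    field_simp
  -- variance of S
  have hSvar : variance S ℙ = σ2 / B := by
    rw [hSeq, variance_smul]
    rw [IndepFun.variance_sum (fun i _ => hL2 i)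
      (fun i _ j _ hij => hindep.indepFun hij)]
    simp only [hvar, Finset.sum_const, Finset.card_univ, Fintype.card_fin, nsmul_eq_mul]
    field_simp
  -- the centered quadratic is integrable
  have hsqInt : Integrable (fun ω => (S ω - μ0) ^ 2) ℙ := by
    have := (hS2.sub (memLp_const μ0)).integrable_sq
    simpa using this
  have hvareq : ∫ ω, (S ω - μ0) ^ 2 ∂ℙ = σ2 / B := by
    rw [← hSvar, variance_eq_integral hS2.aemeasurable, hSmean]
  -- linear term has mean zero
  have hlineq : ∫ ω, g' μ0 * (S ω - μ0) ∂ℙ = 0 := by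
    rw [integral_const_mul, integral_sub hSint (integrable_const μ0), hSmean, integral_const]
    simp
  have hlinInt : Integrable (fun ω => g' μ0 * (S ω - μ0)) ℙ :=
    ((hSint.sub (integrable_const μ0)).const_mul _)
  -- rewrite the difference as the integral of the Taylor remainder
  have hgc : Integrable (fun ω => g (S ω) - g μ0) ℙ := hint.sub (integrable_const _)
  have hrem : Integrable (fun ω => g (S ω) - g μ0 - g' μ0 * (S ω - μ0)) ℙ := hgc.sub hlinInt
  have hdiff : (∫ ω, g (S ω) ∂ℙ) - g μ0
      = ∫ ω, (g (S ω) - g μ0 - g' μ0 * (S ω - μ0)) ∂ℙ := by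
    rw [integral_sub hgc hlinInt, integral_sub hint (integrable_const (g μ0)), integral_const,
      hlineq]
    simp
    rfl
  rw [hdiff]
  have hbound : ∀ ω, |g (S ω) - g μ0 - g' μ0 * (S ω - μ0)| ≤ M / 2 * (S ω - μ0) ^ 2 :=
    fun ω => taylor2_aux hg' hg'' hM μ0 (S ω)
  calc |∫ ω, (g (S ω) - g μ0 - g' μ0 * (S ω - μ0)) ∂ℙ|
      ≤ ∫ ω, |g (S ω) - g μ0 - g' μ0 * (S ω - μ0)| ∂ℙ := by
        simpa [Real.norm_eq_abs] using
          norm_integral_le_integral_norm (fun ω => g (S ω) - g μ0 - g' μ0 * (S ω - μ0))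
    _ ≤ ∫ ω, M / 2 * (S ω - μ0) ^ 2 ∂ℙ := by
        exact integral_mono hrem.abs (hsqInt.const_mul _) hbound
    _ = M / 2 * (σ2 / B) := by rw [integral_const_mul, hvareq]
    _ = M * σ2 / (2 * B) := by ring
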